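/- Let A = [[0,1],[1,0]] be the adjacency matrix of the two-node graph, take O = 1, and carry out the cluster-state construction: X = (1+A²)^{-1/2}, Y = A(1+A²)^{-1/2}, S = fromBlocks X (−Y) Y X. Then S equals (1/√2)·[[1,0,0,−1],[0,1,−1,0],[0,1,1,0],[1,0,0,1]], and for every s > 0, S · diag(s,s,s⁻¹,s⁻¹) · Sᵀ equals the 4×4 matrix Γ_EPR(λ,μ) = [[λ,0,0,μ],[0,λ,μ,0],[0,μ,λ,0],[μ,0,0,λ]] with λ = (s+s⁻¹)/2 and μ = (s−s⁻¹)/2. -/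

import Mathlib

open Matrix

noncomputable section

/-- For a real symmetric matrix `A`, the matrix `1 + A²` is positive definite. -/
theorem onePlusSq_posDef {n : ℕ} (A : Matrix (Fin n) (Fin n) ℝ) (hA : Aᵀ = A) :
    (1 + A * A).PosDef := by
  have h2 : (A * A).PosSemidef := by
    have h := Matrix.posSemidef_conjTranspose_mul_self A
    simpa [Matrix.conjTranspose_eq_transpose_of_trivial, hA] using h
  exact Matrix.PosDef.add_posSemidef Matrix.PosDef.one h2

/-- `(1 + A²)^{-1/2}`: the inverse of the unique positive-definite square root of `1 + A²`. -/
def invSqrtOnePlusSq {n : ℕ} (A : Matrix (Fin n) (Fin n) ℝ) (hA : Aᵀ = A) :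
    Matrix (Fin n) (Fin n) ℝ :=
  (((onePlusSq_posDef A hA).posSemidef.1.eigenvectorUnitary : Matrix (Fin n) (Fin n) ℝ) *
    diagonal (Real.sqrt ∘ (onePlusSq_posDef A hA).posSemidef.1.eigenvalues) *
    star ((onePlusSq_posDef A hA).posSemidef.1.eigenvectorUnitary : Matrix (Fin n) (Fin n) ℝ))⁻¹

/-- Covariance matrix `diag(s,…,s,s⁻¹,…,s⁻¹)` of `n` equally squeezed vacuum modes. -/
def GammaSqz (n : ℕ) (s : ℝ) : Matrix (Fin n ⊕ Fin n) (Fin n ⊕ Fin n) ℝ :=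
  Matrix.fromBlocks (s • 1) 0 0 (s⁻¹ • 1)

/-- The 4×4 EPR covariance matrix with diagonal entries `l` and antidiagonal
entries `m`, in ordering `(Q₁,Q₂,P₁,P₂)`. -/
def GammaEPR (l m : ℝ) : Matrix (Fin 2 ⊕ Fin 2) (Fin 2 ⊕ Fin 2) ℝ :=
  Matrix.fromBlocks (l • 1) (m • !![0,1;1,0]) (m • !![0,1;1,0]) (l • 1)

/-- Adjacency matrix of the two-node graph. -/
def A2 : Matrix (Fin 2) (Fin 2) ℝ := !![0,1;1,0]

theorem A2_symm : A2ᵀ = A2 := by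
  ext i j
  fin_cases i <;> fin_cases j <;> simp [A2, Matrix.transpose_apply]

lemma onePlus_A2_sq : (1 + A2 * A2) = (2:ℝ) • (1 : Matrix (Fin 2) (Fin 2) ℝ) := by
  show (1 : Matrix (Fin 2) (Fin 2) ℝ) + A2 * A2 = _
  ext i j
  fin_cases i <;> fin_cases j <;>
    simp [A2, Matrix.mul_apply, Fin.sum_univ_two, Matrix.one_apply] <;> norm_num

lemma sqrt_two_smul_posSemidef :
    Matrix.PosSemidef ((Real.sqrt 2 : ℝ) • (1 : Matrix (Fin 2) (Fin 2) ℝ)) := by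
  constructor
  · show ((Real.sqrt 2 : ℝ) • (1 : Matrix (Fin 2) (Fin 2) ℝ))ᴴ = _
    rw [Matrix.conjTranspose_smul, Matrix.conjTranspose_one]
    simp
  · intro x
    exact (Matrix.PosSemidef.one.smul (Real.sqrt_nonneg 2)).2 x

lemma invSqrt_A2_eq :
    invSqrtOnePlusSq A2 A2_symm = (Real.sqrt 2)⁻¹ • (1 : Matrix (Fin 2) (Fin 2) ℝ) := by
  have h2 : (0:ℝ) < Real.sqrt 2 := Real.sqrt_pos.mpr (by norm_num)
  have hsq : ((Real.sqrt 2 : ℝ) • (1 : Matrix (Fin 2) (Fin 2) ℝ)) ^ 2 = 1 + A2 * A2 := by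
    rw [onePlus_A2_sq]
    rw [sq, Matrix.smul_mul, Matrix.mul_smul, smul_smul, Matrix.one_mul]
    congr 1
    exact Real.mul_self_sqrt (by norm_num)
  have hev : ∀ i, (onePlusSq_posDef A2 A2_symm).posSemidef.1.eigenvalues i = 2 := by
    intro i
    rw [(onePlusSq_posDef A2 A2_symm).posSemidef.1.eigenvalues_eq i]
    have hv : ∀ v : Fin 2 → ℝ, (1 + A2 * A2) *ᵥ v = (2:ℝ) • v := by
      intro v
      rw [onePlus_A2_sq, Matrix.smul_mulVec, Matrix.one_mulVec]
    rw [hv, dotProduct_smul]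
    have hn := (onePlusSq_posDef A2 A2_symm).posSemidef.1.eigenvectorBasis.orthonormal.1 i
    simp [← EuclideanSpace.inner_eq_star_dotProduct, hn]
    rw [EuclideanSpace.norm_eq, Real.sqrt_eq_one, Fin.sum_univ_two] at hn
    simp only [Real.norm_eq_abs, sq_abs] at hn
    simpa only [sq] using hn
  have heq : ((onePlusSq_posDef A2 A2_symm).posSemidef.1.eigenvectorUnitary : Matrix (Fin 2) (Fin 2) ℝ) *
      diagonal (Real.sqrt ∘ (onePlusSq_posDef A2 A2_symm).posSemidef.1.eigenvalues) *
      star ((onePlusSq_posDef A2 A2_symm).posSemidef.1.eigenvectorUnitary : Matrix (Fin 2) (Fin 2) ℝ)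
      = (Real.sqrt 2 : ℝ) • (1 : Matrix (Fin 2) (Fin 2) ℝ) := by
    have hd : diagonal (Real.sqrt ∘ (onePlusSq_posDef A2 A2_symm).posSemidef.1.eigenvalues)
        = (Real.sqrt 2 : ℝ) • (1 : Matrix (Fin 2) (Fin 2) ℝ) := by
      ext i j
      simp [Matrix.diagonal_apply, Matrix.one_apply, hev]
    rw [hd, Matrix.mul_smul, Matrix.mul_one, Matrix.smul_mul,
      Matrix.mem_unitaryGroup_iff.mp (onePlusSq_posDef A2 A2_symm).posSemidef.1.eigenvectorUnitary.2]
  unfold invSqrtOnePlusSq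
  rw [heq]
  apply Matrix.inv_eq_right_inv
  rw [Matrix.smul_mul, Matrix.mul_smul, smul_smul, Matrix.one_mul,
    mul_inv_cancel₀ (ne_of_gt h2), one_smul]

/-- For the two-node graph with `O = 1`, the cluster-construction matrix `S` equals
`(1/√2)·[[1,0,0,−1],[0,1,−1,0],[0,1,1,0],[1,0,0,1]]`, and for every `s > 0`,
`S diag(s,s,s⁻¹,s⁻¹) Sᵀ = Γ_EPR((s+s⁻¹)/2, (s−s⁻¹)/2)`. -/
theorem two_mode_cluster :
    Matrix.fromBlocks (invSqrtOnePlusSq A2 A2_symm) (-(A2 * invSqrtOnePlusSq A2 A2_symm))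
        (A2 * invSqrtOnePlusSq A2 A2_symm) (invSqrtOnePlusSq A2 A2_symm) =
      (Real.sqrt 2)⁻¹ •
        Matrix.fromBlocks (1 : Matrix (Fin 2) (Fin 2) ℝ) (-!![0,1;1,0]) !![0,1;1,0] 1 ∧
    ∀ s : ℝ, 0 < s →
      Matrix.fromBlocks (invSqrtOnePlusSq A2 A2_symm) (-(A2 * invSqrtOnePlusSq A2 A2_symm))
          (A2 * invSqrtOnePlusSq A2 A2_symm) (invSqrtOnePlusSq A2 A2_symm) *
        GammaSqz 2 s *
        (Matrix.fromBlocks (invSqrtOnePlusSq A2 A2_symm) (-(A2 * invSqrtOnePlusSq A2 A2_symm))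
            (A2 * invSqrtOnePlusSq A2 A2_symm) (invSqrtOnePlusSq A2 A2_symm))ᵀ =
      GammaEPR ((s + s⁻¹) / 2) ((s - s⁻¹) / 2) := by
  have hS := invSqrt_A2_eq
  have h2 : (0:ℝ) < Real.sqrt 2 := Real.sqrt_pos.mpr (by norm_num)
  have hss : (Real.sqrt 2)⁻¹ * (Real.sqrt 2)⁻¹ = 2⁻¹ := by
    rw [← mul_inv]
    congr 1
    exact Real.mul_self_sqrt (by norm_num)
  constructor
  · rw [hS]
    ext i j
    cases i <;> cases j <;> rename_i i j <;> fin_cases i <;> fin_cases j <;>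
      simp [A2, Matrix.fromBlocks, Matrix.mul_apply, Fin.sum_univ_two, Matrix.one_apply]
  · intro s hs
    rw [hS]
    set M : Matrix (Fin 2) (Fin 2) ℝ := !![0,1;1,0] with hM
    have hMM : M * M = 1 := by
      ext i j
      fin_cases i <;> fin_cases j <;>
        simp [hM, Matrix.mul_apply, Fin.sum_univ_two, Matrix.one_apply]
    have hMT : Mᵀ = M := by
      ext i j
      fin_cases i <;> fin_cases j <;> simp [hM]
    set B : Matrix (Fin 2 ⊕ Fin 2) (Fin 2 ⊕ Fin 2) ℝ :=
      Matrix.fromBlocks 1 (-M) M 1 with hB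
    have hBT : Bᵀ = Matrix.fromBlocks 1 M (-M) 1 := by
      rw [hB, Matrix.fromBlocks_transpose]
      simp [hMT]
    have key : B * GammaSqz 2 s * Bᵀ =
        Matrix.fromBlocks ((s + s⁻¹) • 1) ((s - s⁻¹) • M) ((s - s⁻¹) • M)
          ((s + s⁻¹) • 1) := by
      rw [hBT, hB, GammaSqz, Matrix.fromBlocks_multiply, Matrix.fromBlocks_multiply]
      refine Matrix.fromBlocks_inj.mpr ⟨?_, ?_, ?_, ?_⟩ <;>
        simp [Matrix.mul_smul, Matrix.smul_mul, hMM, smul_smul, add_smul, sub_smul,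
          neg_smul, Matrix.neg_mul, Matrix.mul_neg] <;> abel
    have hA2M : A2 = M := rfl
    have hSB : Matrix.fromBlocks ((Real.sqrt 2)⁻¹ • (1 : Matrix (Fin 2) (Fin 2) ℝ))
        (-(A2 * (Real.sqrt 2)⁻¹ • 1)) (A2 * (Real.sqrt 2)⁻¹ • 1) ((Real.sqrt 2)⁻¹ • 1)
        = (Real.sqrt 2)⁻¹ • B := by
      rw [hB, Matrix.fromBlocks_smul, hA2M]
      congr 1 <;> simp [Matrix.mul_smul]
    rw [hSB, Matrix.smul_mul, Matrix.smul_mul, Matrix.transpose_smul, Matrix.mul_smul,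
      smul_smul]
    rw [hss, key, GammaEPR, Matrix.fromBlocks_smul, smul_smul, smul_smul]
    refine Matrix.fromBlocks_inj.mpr ⟨?_, ?_, ?_, ?_⟩ <;> congr 1 <;> ring
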